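/- Correctness of the pruning procedure (Theorem A.3 of the paper, set form): for finite sets of tokens A, B, G with A ⊆ B, A nonempty, G nonempty, and A ∩ G nonempty, the F1 score of A against ground truth G is at most the upper bound computed from B; that is, F1(A, G) ≤ 2·recall(B, G) / (1 + recall(B, G)). (Since any extension of a sub-program produces a token output contained in that of the sub-program, no extension of a sub-program whose upper bound is below the current optimum can achieve an F1 score above that optimum.) -/

import Mathlib

/-- Correctness of the pruning procedure (Theorem A.3, set form): for finite
token sets `A ⊆ B` with `A`, `G`, and `A ∩ G` nonempty, the F1 score of `A`
against ground truth `G` is at most the upper bound computed from `B`: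
`F1(A, G) ≤ 2·recall(B, G) / (1 + recall(B, G))`, where
`precision(A,G) = |A ∩ G| / |A|` and `recall(X,G) = |X ∩ G| / |G|`. -/
theorem f1_le_ub_superset {α : Type*} [DecidableEq α] (A B G : Finset α)
    (hAB : A ⊆ B) (hA : A.Nonempty) (hG : G.Nonempty) (hAG : (A ∩ G).Nonempty) :
    2 * (((A ∩ G).card : ℝ) / (A.card : ℝ)) * (((A ∩ G).card : ℝ) / (G.card : ℝ)) /
        (((A ∩ G).card : ℝ) / (A.card : ℝ) + ((A ∩ G).card : ℝ) / (G.card : ℝ))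
      ≤ 2 * (((B ∩ G).card : ℝ) / (G.card : ℝ)) /
          (1 + ((B ∩ G).card : ℝ) / (G.card : ℝ)) := by
  have hi : (0:ℝ) < ((A ∩ G).card : ℝ) := by
    exact_mod_cast Finset.card_pos.mpr hAG
  have ha : (0:ℝ) < (A.card : ℝ) := by exact_mod_cast Finset.card_pos.mpr hA
  have hg : (0:ℝ) < (G.card : ℝ) := by exact_mod_cast Finset.card_pos.mpr hG
  have hij : ((A ∩ G).card : ℝ) ≤ ((B ∩ G).card : ℝ) := by
    exact_mod_cast Finset.card_le_card (Finset.inter_subset_inter hAB le_rfl)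
  have hia : ((A ∩ G).card : ℝ) ≤ (A.card : ℝ) := by
    exact_mod_cast Finset.card_le_card (Finset.inter_subset_left)
  have hj : (0:ℝ) < ((B ∩ G).card : ℝ) := lt_of_lt_of_le hi hij
  set i : ℝ := ((A ∩ G).card : ℝ)
  set a : ℝ := (A.card : ℝ)
  set g : ℝ := (G.card : ℝ)
  set j : ℝ := ((B ∩ G).card : ℝ)
  have hd1 : 0 < i / a + i / g := by positivity
  have hd2 : 0 < 1 + j / g := by positivity
  rw [div_le_div_iff₀ hd1 hd2]
  have h1 : 0 < g + j := by linarith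
  field_simp
  have key : i * (g + j) ≤ j * (g + a) := by nlinarith
  nlinarith [mul_nonneg (mul_nonneg (mul_nonneg ha.le (mul_pos hg hg).le) hi.le)
    (sub_nonneg.mpr key)]
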